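/- Rectangle property: if [ts',te'] is the tightest time interval of the core induced by [ts,te] (so [ts',te'] ⊆ [ts,te]), then every interval [r,c] in the rectangle {[r,c] | ts ≤ r ≤ ts', te' ≤ c ≤ te} induces a temporal k-core identical to T^k_[ts,te]. -/
import Mathlib


abbrev TEdge : Type := ℕ × ℕ × ℤ

/-- Projection of a temporal edge set over time interval [a,b]. -/
def projE (E : Finset TEdge) (a b : ℤ) : Finset TEdge :=
  E.filter (fun e => a ≤ e.2.2 ∧ e.2.2 ≤ b)

def verts (E : Finset TEdge) : Finset ℕ :=
  E.image (fun e => e.1) ∪ E.image (fun e => e.2.1)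

/-- Distinct neighbors of `v` inside vertex set `S` via edges of `E`. -/
def nbrs (E : Finset TEdge) (S : Finset ℕ) (v : ℕ) : Finset ℕ :=
  S.filter (fun u => u ≠ v ∧
    (E.filter (fun e => (e.1 = u ∧ e.2.1 = v) ∨ (e.1 = v ∧ e.2.1 = u))).Nonempty)

/-- `S` is a `k`-core candidate: every vertex of `S` has ≥ k distinct neighbors in `S`. -/
def isCoreSet (E : Finset TEdge) (k : ℕ) (S : Finset ℕ) : Prop :=
  ∀ v ∈ S, k ≤ (nbrs E S v).card

instance (E : Finset TEdge) (k : ℕ) : DecidablePred (isCoreSet E k) := fun S => by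
  unfold isCoreSet; infer_instance

/-- The `k`-core vertex set of a temporal edge set: union of all candidates. -/
def core (E : Finset TEdge) (k : ℕ) : Finset ℕ :=
  ((verts E).powerset.filter (isCoreSet E k)).sup id

/-- The edges of `E` induced among the `k`-core vertices. -/
def coreEdges (E : Finset TEdge) (k : ℕ) : Finset TEdge :=
  E.filter (fun e => e.1 ∈ core E k ∧ e.2.1 ∈ core E k)

/-- Vertices of the temporal k-core of interval [a,b]. -/
def coreV (E : Finset TEdge) (k : ℕ) (a b : ℤ) : Finset ℕ :=
  core (projE E a b) k

/-- Temporal edges of the temporal k-core of interval [a,b]. -/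
def coreE (E : Finset TEdge) (k : ℕ) (a b : ℤ) : Finset TEdge :=
  coreEdges (projE E a b) k

/-- Two intervals induce identical temporal k-cores (same vertices and temporal edges). -/
def identCore (E : Finset TEdge) (k : ℕ) (a b a' b' : ℤ) : Prop :=
  coreV E k a b = coreV E k a' b' ∧ coreE E k a b = coreE E k a' b'

lemma mem_core_iff {E : Finset TEdge} {k : ℕ} {v : ℕ} :
    v ∈ core E k ↔ ∃ S, S ⊆ verts E ∧ isCoreSet E k S ∧ v ∈ S := by
  unfold core
  simp [Finset.mem_sup, Finset.mem_filter, Finset.mem_powerset, and_assoc]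

lemma subset_core {E : Finset TEdge} {k : ℕ} {S : Finset ℕ}
    (h1 : S ⊆ verts E) (h2 : isCoreSet E k S) : S ⊆ core E k :=
  fun v hv => mem_core_iff.2 ⟨S, h1, h2, hv⟩

lemma nbrs_subset_of_subset {E : Finset TEdge} {S T : Finset ℕ} {v : ℕ}
    (h : S ⊆ T) : nbrs E S v ⊆ nbrs E T v := by
  unfold nbrs
  exact Finset.filter_subset_filter _ h

lemma isCoreSet_core (E : Finset TEdge) (k : ℕ) : isCoreSet E k (core E k) := by
  intro v hv
  obtain ⟨S, hS1, hS2, hvS⟩ := mem_core_iff.1 hv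
  calc k ≤ (nbrs E S v).card := hS2 v hvS
    _ ≤ (nbrs E (core E k) v).card :=
      Finset.card_le_card (nbrs_subset_of_subset (subset_core hS1 hS2))

lemma nbrs_mono_E {A B : Finset TEdge} {S : Finset ℕ} {v : ℕ}
    (h : A ⊆ B) : nbrs A S v ⊆ nbrs B S v := by
  unfold nbrs
  intro u hu
  rw [Finset.mem_filter] at hu ⊢
  obtain ⟨huS, h1, e, he⟩ := hu
  rw [Finset.mem_filter] at he
  exact ⟨huS, h1, e, Finset.mem_filter.2 ⟨h he.1, he.2⟩⟩

lemma verts_mono {A B : Finset TEdge} (h : A ⊆ B) : verts A ⊆ verts B := by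
  unfold verts
  exact Finset.union_subset_union (Finset.image_subset_image h) (Finset.image_subset_image h)

lemma core_eq_of_between {A B : Finset TEdge} {k : ℕ}
    (hAB : A ⊆ B) (hC : coreEdges B k ⊆ A) : core A k = core B k := by
  rcases Nat.eq_zero_or_pos k with hk | hk
  · subst hk
    have hBA : B ⊆ A := by
      intro e he
      apply hC
      refine Finset.mem_filter.2 ⟨he, ?_, ?_⟩
      · apply subset_core (fun v hv => hv) (fun v _ => Nat.zero_le _)
        exact Finset.mem_union_left _ (Finset.mem_image.2 ⟨e, he, rfl⟩)
      · apply subset_core (fun v hv => hv) (fun v _ => Nat.zero_le _)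
        exact Finset.mem_union_right _ (Finset.mem_image.2 ⟨e, he, rfl⟩)
    rw [Finset.Subset.antisymm hAB hBA]
  · -- key: edges among core B k vertices are in coreEdges B k ⊆ A
    have key : ∀ v ∈ core B k, nbrs B (core B k) v ⊆ nbrs A (core B k) v := by
      intro v hv u hu
      unfold nbrs at hu ⊢
      rw [Finset.mem_filter] at hu ⊢
      obtain ⟨huS, hne, e, he⟩ := hu
      rw [Finset.mem_filter] at he
      refine ⟨huS, hne, e, Finset.mem_filter.2 ⟨?_, he.2⟩⟩
      apply hC
      refine Finset.mem_filter.2 ⟨he.1, ?_⟩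
      rcases he.2 with ⟨h1, h2⟩ | ⟨h1, h2⟩
      · rw [h1, h2]; exact ⟨huS, hv⟩
      · rw [h1, h2]; exact ⟨hv, huS⟩
    have hBsubA : core B k ⊆ core A k := by
      apply subset_core
      · -- core B k ⊆ verts A
        intro v hv
        have hcard := isCoreSet_core B k v hv
        have hne : (nbrs B (core B k) v).Nonempty := by
          rw [← Finset.card_pos]; omega
        obtain ⟨u, hu⟩ := hne
        have hu' := key v hv hu
        unfold nbrs at hu'
        rw [Finset.mem_filter] at hu'
        obtain ⟨_, _, e, he⟩ := hu'
        rw [Finset.mem_filter] at he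
        rcases he.2 with ⟨h1, h2⟩ | ⟨h1, h2⟩
        · exact Finset.mem_union_right _ (Finset.mem_image.2 ⟨e, he.1, h2⟩)
        · exact Finset.mem_union_left _ (Finset.mem_image.2 ⟨e, he.1, h1⟩)
      · intro v hv
        calc k ≤ (nbrs B (core B k) v).card := isCoreSet_core B k v hv
          _ ≤ (nbrs A (core B k) v).card := Finset.card_le_card (key v hv)
    have hAsubB : core A k ⊆ core B k := by
      apply subset_core
      · intro v hv
        obtain ⟨S, hS1, _, hvS⟩ := mem_core_iff.1 hv
        exact verts_mono hAB (hS1 hvS)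
      · intro v hv
        calc k ≤ (nbrs A (core A k) v).card := isCoreSet_core A k v hv
          _ ≤ (nbrs B (core A k) v).card := Finset.card_le_card (nbrs_mono_E hAB)
    exact Finset.Subset.antisymm hAsubB hBsubA

lemma coreEdges_eq_of_between {A B : Finset TEdge} {k : ℕ}
    (hAB : A ⊆ B) (hC : coreEdges B k ⊆ A) : coreEdges A k = coreEdges B k := by
  have hcore := core_eq_of_between hAB hC
  ext e
  unfold coreEdges
  rw [Finset.mem_filter, Finset.mem_filter, hcore]
  constructor
  · rintro ⟨he, h2⟩; exact ⟨hAB he, h2⟩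
  · rintro ⟨he, h2⟩
    exact ⟨hC (Finset.mem_filter.2 ⟨he, h2⟩), h2⟩
/-- rectangle property: if [ts',te'] is the TTI of the core induced
by [ts,te], then every interval [r,c] with ts ≤ r ≤ ts' and te' ≤ c ≤ te induces
a temporal k-core identical to T^k_[ts,te]. -/
theorem stmt_10 (E : Finset TEdge) (k : ℕ) (ts te ts' te' : ℤ)
    (h : (coreE E k ts te).Nonempty)
    (hmin : IsLeast {t : ℤ | ∃ e ∈ coreE E k ts te, e.2.2 = t} ts')
    (hmax : IsGreatest {t : ℤ | ∃ e ∈ coreE E k ts te, e.2.2 = t} te') :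
    ∀ r c : ℤ, ts ≤ r → r ≤ ts' → te' ≤ c → c ≤ te →
      identCore E k r c ts te := by
  intro r c h1 h2 h3 h4
  have hAB : projE E r c ⊆ projE E ts te := by
    intro e he
    rw [projE, Finset.mem_filter] at he ⊢
    exact ⟨he.1, by omega, by omega⟩
  have hC : coreEdges (projE E ts te) k ⊆ projE E r c := by
    intro e he
    have hts' : ts' ≤ e.2.2 := hmin.2 ⟨e, he, rfl⟩
    have hte' : e.2.2 ≤ te' := hmax.2 ⟨e, he, rfl⟩
    have heE : e ∈ E := by
      have := (Finset.mem_filter.1 he).1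
      exact (Finset.mem_filter.1 this).1
    exact Finset.mem_filter.2 ⟨heE, by omega, by omega⟩
  exact ⟨core_eq_of_between hAB hC, coreEdges_eq_of_between hAB hC⟩
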